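/- For a nonholonomically coupled system with quadratic potential U(x) = ½xᵀKx - fᵀx, K = BᵀB with B of full rank m×(n-1), setting y = Bx, b(z) = Bk(z), the reduced dynamics (y, v) satisfy ẏ = b(z)v, v̇ = -b(z)ᵀy + k(z)ᵀf. Equivalently, with an auxiliary variable ε with ε(0)=1 and ε̇=0, the vector (y, v, ε) evolves by a matrix lying in the Lie algebra 𝔰𝔢(m+1) of SO(m+1) ⋉ ℝ^{m+1}. -/

import Mathlib

open Matrix

/-- The skew-symmetric `(m+1)×(m+1)` block matrix `[[0, b],[-bᵀ, 0]]`. -/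
def cvtSkewBlock {m : ℕ} (b : Fin m → ℝ) :
    Matrix (Fin m ⊕ Unit) (Fin m ⊕ Unit) ℝ :=
  Matrix.fromBlocks 0 (Matrix.replicateCol Unit b) (-(Matrix.replicateRow Unit b)) 0

/-- The augmented coefficient matrix `[[0, b, 0],[-bᵀ, 0, c],[0, 0, 0]]`,
an element of `𝔰𝔢(m+1)`, the Lie algebra of `SO(m+1) ⋉ ℝ^{m+1}`. -/
def seMatrix {m : ℕ} (b : Fin m → ℝ) (c : ℝ) :
    Matrix ((Fin m ⊕ Unit) ⊕ Unit) ((Fin m ⊕ Unit) ⊕ Unit) ℝ :=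
  Matrix.fromBlocks (cvtSkewBlock b)
    (Matrix.replicateCol Unit (Sum.elim 0 fun _ => c)) 0 0

/-- For a nonholonomically coupled system with quadratic potential
`U(x) = ½ xᵀ K x - fᵀ x`, `K = Bᵀ B`, with `y = B x` and `b(z) = B k(z)`,
the reduced dynamics satisfy `ẏ = b(z) v`, `v̇ = -b(z)ᵀ y + k(z)ᵀ f`;
equivalently, with an auxiliary variable `ε ≡ 1`, the vector `(y, v, ε)`
evolves by a matrix lying in `𝔰𝔢(m+1)`. -/
theorem stmt_10 (n m : ℕ)
    (B : Matrix (Fin m) (Fin n) ℝ)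
    (hB : B.rank = m)
    (f : Fin n → ℝ)
    (k : ℝ → Fin n → ℝ)
    (x : ℝ → Fin n → ℝ) (v : ℝ → ℝ) (z : ℝ → ℝ)
    (hx : ∀ t, HasDerivAt x (v t • k (z t)) t)
    (hv : ∀ t, HasDerivAt v (k (z t) ⬝ᵥ (-((Bᵀ * B) *ᵥ x t) + f)) t)
    (w : ℝ → (Fin m ⊕ Unit) ⊕ Unit → ℝ)
    (hw : ∀ t, w t = Sum.elim (Sum.elim (B *ᵥ x t) fun _ => v t) fun _ => 1) :
    ∀ t : ℝ,
      HasDerivAt (fun s => B *ᵥ x s) (v t • (B *ᵥ k (z t))) t ∧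
      HasDerivAt v (-((B *ᵥ k (z t)) ⬝ᵥ (B *ᵥ x t)) + k (z t) ⬝ᵥ f) t ∧
      (cvtSkewBlock (B *ᵥ k (z t)))ᵀ = -cvtSkewBlock (B *ᵥ k (z t)) ∧
      HasDerivAt w (seMatrix (B *ᵥ k (z t)) (k (z t) ⬝ᵥ f) *ᵥ w t) t := by
  intro t
  have hy : HasDerivAt (fun s => B *ᵥ x s) (v t • (B *ᵥ k (z t))) t := by
    rw [hasDerivAt_pi]
    intro i
    have h1 : HasDerivAt (fun s => ∑ j, B i j * x s j)
        (∑ j, B i j * (v t * k (z t) j)) t := by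
      refine HasDerivAt.fun_sum fun j _ => ?_
      exact ((hasDerivAt_pi.mp (hx t)) j).const_mul (B i j)
    have h2 : (∑ j, B i j * (v t * k (z t) j)) = (v t • (B *ᵥ k (z t))) i := by
      simp only [Matrix.mulVec, dotProduct, Finset.mul_sum, Pi.smul_apply,
        smul_eq_mul]
      exact Finset.sum_congr rfl fun j _ => by ring
    rw [← h2]
    exact h1
  have hv' : HasDerivAt v (-((B *ᵥ k (z t)) ⬝ᵥ (B *ᵥ x t)) + k (z t) ⬝ᵥ f) t := by
    have := hv t
    have heq : k (z t) ⬝ᵥ (-((Bᵀ * B) *ᵥ x t) + f)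
        = -((B *ᵥ k (z t)) ⬝ᵥ (B *ᵥ x t)) + k (z t) ⬝ᵥ f := by
      rw [dotProduct_add, dotProduct_neg, ← Matrix.mulVec_mulVec,
        Matrix.dotProduct_mulVec, Matrix.vecMul_transpose]
    rwa [heq] at this
  refine ⟨hy, hv', ?_, ?_⟩
  · ext i j
    rcases i with i | i <;> rcases j with j | j <;>
      simp [cvtSkewBlock, Matrix.fromBlocks]
  · have hwfun : w = fun s => Sum.elim (Sum.elim (B *ᵥ x s) fun _ => v s) fun _ => 1 :=
      funext hw
    subst hwfun
    rw [hasDerivAt_pi]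
    intro i
    rcases i with (i | i) | i
    · have := hasDerivAt_pi.mp hy i
      refine this.congr_deriv ?_
      simp [seMatrix, cvtSkewBlock, hw, Matrix.mulVec, dotProduct,
        Matrix.fromBlocks]
      ring
    · refine hv'.congr_deriv ?_
      simp [seMatrix, cvtSkewBlock, hw, Matrix.mulVec, dotProduct,
        Matrix.fromBlocks]
    · have : HasDerivAt (fun _ : ℝ => (1:ℝ)) 0 t := hasDerivAt_const t 1
      refine this.congr_deriv ?_
      simp [seMatrix, cvtSkewBlock, Matrix.mulVec, dotProduct,
        Matrix.fromBlocks]
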